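/- If a poset P admits a containment model by paths in a host tree T with maximum degree Δ ≥ 2, radius r ≥ 1, and at most l leaf nodes, then dim(P) ≤ min(l, 2⌈log₂ log₂ Δ⌉ + 2⌈log₂ r⌉ + 3). -/

import Mathlib

open SimpleGraph
set_option linter.unusedSectionVars false
set_option maxHeartbeats 1000000

/-- A containment model of the poset `X` by paths of the graph `G`. -/
def GraphCPTModel {V : Type*} (G : SimpleGraph V) {X : Type*} [PartialOrder X]
    (M : X → Set V) : Prop :=
  (∀ x, ∃ (u v : V) (p : G.Walk u v), p.IsPath ∧ M x = {w | w ∈ p.support}) ∧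
  ∀ x y : X, x ≠ y → (x ≤ y ↔ M x ⊂ M y)

/-- The radius of a graph: the least possible eccentricity of a vertex. -/
noncomputable def graphRadius {V : Type*} (G : SimpleGraph V) : ℕ :=
  sInf {e | ∃ c : V, ∀ v, G.dist c v ≤ e}

/-- `L` is a (non-strict) linear order relation on `X`. -/
def IsLinearOrderRel {X : Type*} (L : X → X → Prop) : Prop :=
  (∀ a, L a a) ∧ (∀ a b, L a b → L b a → a = b) ∧
  (∀ a b c, L a b → L b c → L a c) ∧ (∀ a b, L a b ∨ L b a)

/-- The poset `X` has dimension at most `k`: there are `k` linear extensions of the order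
whose intersection is the order. -/
def DimLE (X : Type*) [PartialOrder X] (k : ℕ) : Prop :=
  ∃ L : Fin k → X → X → Prop,
    (∀ i, IsLinearOrderRel (L i)) ∧ ∀ a b : X, a ≤ b ↔ ∀ i, L i a b

/-- The dimension of the poset `X`. -/
noncomputable def posetDim (X : Type*) [PartialOrder X] : ℕ :=
  sInf {k | DimLE X k}
variable {V : Type} [Fintype V] [DecidableEq V] {G : SimpleGraph V} [DecidableRel G.Adj]
namespace CPTaux

/-- The unique path between two vertices of a tree. -/
noncomputable def tp (hT : G.IsTree) (u v : V) : G.Walk u v :=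
  Classical.choose (hT.existsUnique_path u v)

lemma tp_isPath (hT : G.IsTree) (u v : V) : (tp hT u v).IsPath :=
  (Classical.choose_spec (hT.existsUnique_path u v)).1

lemma tp_eq (hT : G.IsTree) {u v : V} (p : G.Walk u v) (hp : p.IsPath) : p = tp hT u v :=
  (Classical.choose_spec (hT.existsUnique_path u v)).2 p hp

lemma tp_length (hT : G.IsTree) (u v : V) : (tp hT u v).length = G.dist u v := by
  refine le_antisymm ?_ (SimpleGraph.dist_le _)
  obtain ⟨w, hw⟩ := (hT.isConnected u v).exists_walk_length_eq_dist
  have hb : w.bypass = tp hT u v := tp_eq hT _ w.bypass_isPath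
  calc (tp hT u v).length = w.bypass.length := by rw [hb]
    _ ≤ w.length := SimpleGraph.Walk.length_bypass_le w
    _ = G.dist u v := hw

lemma dist_add_of_mem (hT : G.IsTree) {u v w : V} (h : w ∈ (tp hT u v).support) :
    G.dist u w + G.dist w v = G.dist u v := by
  have ht : ((tp hT u v).takeUntil w h) = tp hT u w :=
    tp_eq hT _ ((tp_isPath hT u v).takeUntil h)
  have hd : ((tp hT u v).dropUntil w h) = tp hT w v :=
    tp_eq hT _ ((tp_isPath hT u v).dropUntil h)
  have := congrArg SimpleGraph.Walk.length ((tp hT u v).take_spec h)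
  rw [SimpleGraph.Walk.length_append, ht, hd, tp_length, tp_length, tp_length] at this
  exact this

lemma isPath_of_length_eq_dist (hT : G.IsTree) {u v : V} (W : G.Walk u v)
    (h : W.length = G.dist u v) : W.IsPath := by
  induction W with
  | nil => exact SimpleGraph.Walk.IsPath.nil
  | @cons a b v hab p ih =>
    have hlen : p.length + 1 = G.dist a v := by simpa using h
    have h1 : G.dist a v ≤ 1 + G.dist b v := by
      have := hT.isConnected.dist_triangle (u := a) (v := b) (w := v)
      have hab1 : G.dist a b = 1 := by
        rw [SimpleGraph.dist_eq_one_iff_adj]; exact hab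
      omega
    have h2 : G.dist b v ≤ p.length := SimpleGraph.dist_le p
    have hp : p.length = G.dist b v := by omega
    have hpp := ih hp
    refine hpp.cons ?_
    intro ha
    have hpe : p = tp hT b v := tp_eq hT p hpp
    have := dist_add_of_mem hT (u := b) (v := v) (w := a) (by rw [← hpe]; exact ha)
    omega

lemma mem_tp_of_dist (hT : G.IsTree) {u v w : V}
    (h : G.dist u w + G.dist w v = G.dist u v) : w ∈ (tp hT u v).support := by
  have hW : ((tp hT u w).append (tp hT w v)).length = G.dist u v := by
    rw [SimpleGraph.Walk.length_append, tp_length, tp_length, h]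
  have hP := isPath_of_length_eq_dist hT _ hW
  have : (tp hT u w).append (tp hT w v) = tp hT u v := tp_eq hT _ hP
  rw [← this, SimpleGraph.Walk.mem_support_append_iff]
  left; exact SimpleGraph.Walk.end_mem_support _

lemma dist_pos_of_ne (hT : G.IsTree) {u v : V} (h : u ≠ v) : 0 < G.dist u v :=
  hT.isConnected.pos_dist_of_ne h

lemma eq_of_mem_of_dist_eq (hT : G.IsTree) {u v w w' : V}
    (hw : w ∈ (tp hT u v).support) (hw' : w' ∈ (tp hT u v).support)
    (h : G.dist u w = G.dist u w') : w = w' := by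
  by_contra hne
  have h1 := dist_add_of_mem hT hw
  have h2 := dist_add_of_mem hT hw'
  -- w' is in the take-part or the drop-part of the split at w
  have hsplit := (tp hT u v).take_spec hw
  have : w' ∈ ((tp hT u v).takeUntil w hw).support ∨
      w' ∈ ((tp hT u v).dropUntil w hw).support := by
    rw [← SimpleGraph.Walk.mem_support_append_iff, hsplit]; exact hw'
  have ht : ((tp hT u v).takeUntil w hw) = tp hT u w :=
    tp_eq hT _ ((tp_isPath hT u v).takeUntil hw)
  have hd : ((tp hT u v).dropUntil w hw) = tp hT w v :=
    tp_eq hT _ ((tp_isPath hT u v).dropUntil hw)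
  rcases this with hcase | hcase
  · rw [ht] at hcase
    have h3 := dist_add_of_mem hT hcase
    have : G.dist w' w = 0 := by omega
    exact hne ((hT.isConnected.dist_eq_zero_iff.mp (by rwa [SimpleGraph.dist_comm])).symm ▸ rfl)
  · rw [hd] at hcase
    have h3 := dist_add_of_mem hT hcase
    have : G.dist w w' = 0 := by omega
    exact hne (hT.isConnected.dist_eq_zero_iff.mp this)

-- new material
lemma mem_tp_symm (hT : G.IsTree) {u v w : V} :
    w ∈ (tp hT u v).support ↔ w ∈ (tp hT v u).support := by
  have h1 : (tp hT u v).reverse = tp hT v u := tp_eq hT _ ((tp_isPath hT u v).reverse)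
  rw [← h1, SimpleGraph.Walk.support_reverse, List.mem_reverse]

lemma tp_support_union (hT : G.IsTree) (u x v : V) {w : V} (h : w ∈ (tp hT u v).support) :
    w ∈ (tp hT u x).support ∨ w ∈ (tp hT x v).support := by
  set W := (tp hT u x).append (tp hT x v) with hW
  have hb : W.bypass = tp hT u v := tp_eq hT _ W.bypass_isPath
  have : w ∈ W.support := W.support_bypass_subset (by rw [hb]; exact h)
  rwa [SimpleGraph.Walk.mem_support_append_iff] at this

lemma tp_support_mono (hT : G.IsTree) {u v a b : V}
    (ha : a ∈ (tp hT u v).support) (hb : b ∈ (tp hT u v).support) :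
    ∀ w ∈ (tp hT a b).support, w ∈ (tp hT u v).support := by
  intro w hw
  have hsplit : b ∈ ((tp hT u v).takeUntil a ha).support ∨
      b ∈ ((tp hT u v).dropUntil a ha).support := by
    rw [← SimpleGraph.Walk.mem_support_append_iff, (tp hT u v).take_spec ha]; exact hb
  have ht : ((tp hT u v).takeUntil a ha) = tp hT u a :=
    tp_eq hT _ ((tp_isPath hT u v).takeUntil ha)
  have hd : ((tp hT u v).dropUntil a ha) = tp hT a v :=
    tp_eq hT _ ((tp_isPath hT u v).dropUntil ha)
  rcases hsplit with hc | hc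
  · rw [ht] at hc
    have hq : ((tp hT u a).dropUntil b hc) = tp hT b a :=
      tp_eq hT _ ((tp_isPath hT u a).dropUntil hc)
    have hw' : w ∈ ((tp hT u a).dropUntil b hc).support := by
      rw [hq, ← mem_tp_symm hT]; exact hw
    have : w ∈ (tp hT u a).support := SimpleGraph.Walk.support_dropUntil_subset _ hc hw'
    have := SimpleGraph.Walk.support_takeUntil_subset _ ha (by rw [ht]; exact this)
    exact this
  · rw [hd] at hc
    have hq : ((tp hT a v).takeUntil b hc) = tp hT a b :=
      tp_eq hT _ ((tp_isPath hT a v).takeUntil hc)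
    have hw' : w ∈ ((tp hT a v).takeUntil b hc).support := by rw [hq]; exact hw
    have : w ∈ (tp hT a v).support := SimpleGraph.Walk.support_takeUntil_subset _ hc hw'
    have := SimpleGraph.Walk.support_dropUntil_subset _ ha (by rw [hd]; exact this)
    exact this


lemma getVert_mem_support {u v : V} (p : G.Walk u v) (i : ℕ) : p.getVert i ∈ p.support := by
  rw [SimpleGraph.Walk.mem_support_iff_exists_getVert]
  by_cases h : i ≤ p.length
  · exact ⟨i, rfl, h⟩
  · exact ⟨p.length, by rw [SimpleGraph.Walk.getVert_of_length_le p (le_of_not_ge h),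
      SimpleGraph.Walk.getVert_length], le_rfl⟩

lemma isPath_concat {u v w : V} {p : G.Walk u v} (hp : p.IsPath) (h : G.Adj v w)
    (hw : w ∉ p.support) : (p.concat h).IsPath := by
  rw [SimpleGraph.Walk.isPath_def, SimpleGraph.Walk.support_concat]
  rw [SimpleGraph.Walk.isPath_def] at hp
  simp [List.nodup_append, hp, hw]
  exact fun a ha hEq => hw (hEq ▸ ha)

/-- adjacent vertices have distances to `e` differing by exactly one -/
lemma adj_dist_ne (hT : G.IsTree) {u n : V} (e : V) (h : G.Adj u n) :
    G.dist e n ≠ G.dist e u := by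
  intro heq
  by_cases hu : u ∈ (tp hT e n).support
  · have := dist_add_of_mem hT hu
    have : G.dist u n = 0 := by omega
    exact h.ne (hT.isConnected.dist_eq_zero_iff.mp this)
  · have hP := isPath_concat (tp_isPath hT e n) h.symm hu
    have hlen : ((tp hT e n).concat h.symm).length = G.dist e n + 1 := by
      simp [SimpleGraph.Walk.length_concat, tp_length]
    have := tp_eq hT _ hP
    have hlen2 : (tp hT e u).length = G.dist e n + 1 := by rw [← this]; exact hlen
    rw [tp_length] at hlen2
    omega

lemma adj_dist_cases (hT : G.IsTree) {u n : V} (e : V) (h : G.Adj u n) :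
    G.dist e n = G.dist e u + 1 ∨ G.dist e n + 1 = G.dist e u := by
  have h1 : G.dist e n ≤ G.dist e u + 1 := by
    have := hT.isConnected.dist_triangle (u := e) (v := u) (w := n)
    have : G.dist u n = 1 := SimpleGraph.dist_eq_one_iff_adj.mpr h
    omega
  have h2 : G.dist e u ≤ G.dist e n + 1 := by
    have := hT.isConnected.dist_triangle (u := e) (v := n) (w := u)
    have : G.dist n u = 1 := SimpleGraph.dist_eq_one_iff_adj.mpr h.symm
    omega
  have := adj_dist_ne hT e h
  omega

/-- a neighbor of `u` strictly closer to `e` lies on the tree path from `e` to `u`. -/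
lemma parent_mem (hT : G.IsTree) {u n : V} {e : V} (h : G.Adj n u)
    (hd : G.dist e n + 1 = G.dist e u) : n ∈ (tp hT e u).support := by
  have hu : u ∉ (tp hT e n).support := by
    intro hu
    have := dist_add_of_mem hT hu
    have := dist_pos_of_ne hT (h.ne.symm : u ≠ n)
    rw [SimpleGraph.dist_comm] at this
    omega
  have hP := isPath_concat (tp_isPath hT e n) h hu
  have heq : (tp hT e n).concat h = tp hT e u := tp_eq hT _ hP
  rw [← heq, SimpleGraph.Walk.support_concat]
  exact List.mem_append_left _ (SimpleGraph.Walk.end_mem_support _)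

/-- first vertex after `e` on the tree path from `e` to `v`. -/
noncomputable def nu (hT : G.IsTree) (e v : V) : V := (tp hT e v).getVert 1

lemma nu_spec (hT : G.IsTree) {e v : V} (h : v ≠ e) :
    G.Adj e (nu hT e v) ∧ nu hT e v ∈ (tp hT e v).support ∧ G.dist e (nu hT e v) = 1 := by
  have hlen : 0 < (tp hT e v).length := by
    rw [tp_length]; exact dist_pos_of_ne hT (Ne.symm h)
  have hadj := SimpleGraph.Walk.adj_getVert_succ (tp hT e v) hlen
  rw [SimpleGraph.Walk.getVert_zero] at hadj
  exact ⟨hadj, getVert_mem_support _ 1, SimpleGraph.dist_eq_one_iff_adj.mpr hadj⟩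

lemma nu_unique (hT : G.IsTree) {e v n : V} (h : v ≠ e)
    (hn : n ∈ (tp hT e v).support) (hd : G.dist e n = 1) : n = nu hT e v := by
  obtain ⟨_, hmem, hdd⟩ := nu_spec hT h
  exact eq_of_mem_of_dist_eq hT hn hmem (by rw [hd, hdd])

lemma nu_edge (hT : G.IsTree) {e z : V} (h : G.Adj e z) : nu hT e z = z := by
  have hp : (SimpleGraph.Walk.cons h .nil).IsPath := by simp [h.ne]
  have := tp_eq hT _ hp
  rw [nu, ← this]
  rfl

/-- Lemma M : if `e` is not on the tree path between `w` and `w'` then the first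
vertices of the paths from `e` to each of them coincide. -/
lemma nu_eq_of_not_mem (hT : G.IsTree) {e w w' : V} (hw : w ≠ e) (hw' : w' ≠ e)
    (hmem : e ∉ (tp hT w w').support) : nu hT e w = nu hT e w' := by
  obtain ⟨hadj1, hmem1, hd1⟩ := nu_spec hT hw
  obtain ⟨hadj2, hmem2, hd2⟩ := nu_spec hT hw'
  set n := nu hT e w with hn
  set n' := nu hT e w' with hn'
  have hcase1 : n ∈ (tp hT e w').support ∨ n ∈ (tp hT w' w).support :=
    tp_support_union hT e w' w hmem1
  rcases hcase1 with hc | hc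
  · exact nu_unique hT hw' hc hd1
  · have hcase2 : n' ∈ (tp hT e w).support ∨ n' ∈ (tp hT w w').support :=
      tp_support_union hT e w w' hmem2
    rcases hcase2 with hc2 | hc2
    · exact (nu_unique hT hw hc2 hd2).symm
    · by_cases hnn : n = n'
      · exact hnn
      · exfalso
        have hcmem : n ∈ (tp hT w w').support := by rw [mem_tp_symm hT]; exact hc
        have hQ : (SimpleGraph.Walk.cons hadj1.symm (SimpleGraph.Walk.cons hadj2 .nil)).IsPath := by
          simp [SimpleGraph.Walk.isPath_def]
          exact ⟨⟨hadj1.ne', hnn⟩, hadj2.ne⟩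
        have hQe := tp_eq hT _ hQ
        have he : e ∈ (tp hT n n').support := by
          rw [← hQe]; simp
        exact hmem (tp_support_mono hT hcmem hc2 e he)

/-- In every direction from a vertex there is a leaf. -/
lemma exists_leaf_branch (hT : G.IsTree) {e z : V} (h : G.Adj e z) :
    ∃ u : V, G.degree u = 1 ∧ u ≠ e ∧ nu hT e u = z := by
  classical
  set B : Finset V := Finset.univ.filter (fun v => v ≠ e ∧ nu hT e v = z) with hB
  have hzB : z ∈ B := by
    simp only [hB, Finset.mem_filter, Finset.mem_univ, true_and]
    exact ⟨h.ne', nu_edge hT h⟩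
  obtain ⟨u, huB, hmax⟩ := B.exists_max_image (fun v => G.dist e v) ⟨z, hzB⟩
  simp only [hB, Finset.mem_filter, Finset.mem_univ, true_and] at huB
  obtain ⟨hue, hnuu⟩ := huB
  refine ⟨u, ?_, hue, hnuu⟩
  have hnbr : ∀ n, G.Adj u n → (G.dist e n + 1 = G.dist e u) := by
    intro n hn
    rcases adj_dist_cases hT e hn with hcase | hcase
    · exfalso
      have hne : n ≠ e := by
        intro hne; subst hne
        rw [SimpleGraph.dist_self] at hcase
        omega
      have hnu2 : n ∉ (tp hT e u).support := by
        intro hmem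
        have := dist_add_of_mem hT hmem
        have := dist_pos_of_ne hT (hn.ne.symm : n ≠ u)
        rw [SimpleGraph.dist_comm] at this
        omega
      have hP := isPath_concat (tp_isPath hT e u) hn hnu2
      have heq : (tp hT e u).concat hn = tp hT e n := tp_eq hT _ hP
      have hz : nu hT e u ∈ (tp hT e n).support := by
        rw [← heq, SimpleGraph.Walk.support_concat]
        exact List.mem_append_left _ (nu_spec hT hue).2.1
      have hzz : nu hT e u = nu hT e n := nu_unique hT hne hz (nu_spec hT hue).2.2
      have hnB : n ∈ B := by
        simp only [hB, Finset.mem_filter, Finset.mem_univ, true_and]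
        exact ⟨hne, by rw [← hzz, hnuu]⟩
      have := hmax n hnB
      omega
    · omega
  have hne0 : (G.neighborFinset u).Nonempty := by
    refine ⟨(tp hT u e).getVert 1, ?_⟩
    rw [SimpleGraph.mem_neighborFinset]
    have hlen : 0 < (tp hT u e).length := by
      rw [tp_length]; exact dist_pos_of_ne hT hue
    have := SimpleGraph.Walk.adj_getVert_succ (tp hT u e) hlen
    rwa [SimpleGraph.Walk.getVert_zero] at this
  obtain ⟨n₀, hn₀⟩ := hne0
  rw [SimpleGraph.mem_neighborFinset] at hn₀
  have huniq : ∀ n ∈ G.neighborFinset u, n = n₀ := by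
    intro n hn
    rw [SimpleGraph.mem_neighborFinset] at hn
    have h1 := hnbr n hn
    have h2 := hnbr n₀ hn₀
    have hm1 : n ∈ (tp hT e u).support := parent_mem hT hn.symm h1
    have hm2 : n₀ ∈ (tp hT e u).support := parent_mem hT hn₀.symm h2
    exact eq_of_mem_of_dist_eq hT hm1 hm2 (by omega)
  show (G.neighborFinset u).card = 1
  rw [Finset.card_eq_one]
  exact ⟨n₀, Finset.eq_singleton_iff_unique_mem.mpr
    ⟨(SimpleGraph.mem_neighborFinset G u n₀).mpr hn₀, huniq⟩⟩


/-- C1 separation: a vertex outside a path's support admits a leaf strictly closer to it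
than to every vertex of the path. -/
lemma leaf_separation (hT : G.IsTree) {e a b : V} (p : G.Walk a b) (hp : p.IsPath)
    (he : e ∉ p.support) :
    ∃ u : V, G.degree u = 1 ∧ ∀ w ∈ p.support, G.dist u e < G.dist u w := by
  have hae : a ≠ e := fun h => he (h ▸ p.start_mem_support)
  have hpe : p = tp hT a b := tp_eq hT p hp
  have hdw : ∀ w ∈ p.support, w ≠ e := fun w hw hwe => he (hwe ▸ hw)
  set z := nu hT e a with hz
  have hadjz : G.Adj e z := (nu_spec hT hae).1
  by_cases hdeg : G.degree e = 1
  · refine ⟨e, hdeg, fun w hw => ?_⟩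
    rw [SimpleGraph.dist_self, SimpleGraph.dist_comm]
    exact dist_pos_of_ne hT (hdw w hw)
  · have hge : 1 < G.degree e := by
      have h0 : 0 < G.degree e := by
        rw [SimpleGraph.degree_pos_iff_exists_adj]
        exact ⟨z, hadjz⟩
      omega
    have hge' : 1 < (G.neighborFinset e).card := by
      rwa [SimpleGraph.card_neighborFinset_eq_degree]
    obtain ⟨z', hz'mem, hz'ne⟩ := Finset.exists_mem_ne hge' z
    rw [SimpleGraph.mem_neighborFinset] at hz'mem
    obtain ⟨u, hu1, hune, hunu⟩ := exists_leaf_branch hT hz'mem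
    refine ⟨u, hu1, fun w hw => ?_⟩
    have hwe := hdw w hw
    -- nu e w = z
    have hnuw : nu hT e w = z := by
      have hsub : ∀ x ∈ (tp hT w a).support, x ∈ p.support := by
        rw [hpe]; exact tp_support_mono hT (hpe ▸ hw) (hpe ▸ p.start_mem_support)
      have : e ∉ (tp hT w a).support := fun hmem => he (hsub e hmem)
      rw [hz]
      exact nu_eq_of_not_mem hT hwe hae this
    have hne' : nu hT e u ≠ nu hT e w := by rw [hunu, hnuw]; exact hz'ne
    have hmem : e ∈ (tp hT u w).support := by
      by_contra hmem
      exact hne' (nu_eq_of_not_mem hT hune hwe hmem)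
    have := dist_add_of_mem hT hmem
    have : 0 < G.dist e w := dist_pos_of_ne hT (Ne.symm hwe)
    omega

/-- a tree with a vertex of degree 2 has at least two leaves. -/
lemma two_leaves (hT : G.IsTree) (h2 : 2 ≤ G.maxDegree) :
    1 < (Finset.univ.filter fun v => G.degree v = 1).card := by
  have hne : Nonempty V := hT.isConnected.nonempty
  obtain ⟨v₀, hv₀⟩ := G.exists_maximal_degree_vertex
  have hdeg : 1 < G.degree v₀ := by omega
  have hdeg' : 1 < (G.neighborFinset v₀).card := by
    rwa [SimpleGraph.card_neighborFinset_eq_degree]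
  obtain ⟨z₁, hz₁, z₂, hz₂, hzz⟩ := Finset.one_lt_card.mp hdeg' 
  rw [SimpleGraph.mem_neighborFinset] at hz₁ hz₂
  obtain ⟨u₁, hu₁, hu₁e, hunu₁⟩ := exists_leaf_branch hT hz₁
  obtain ⟨u₂, hu₂, hu₂e, hunu₂⟩ := exists_leaf_branch hT hz₂
  have huu : u₁ ≠ u₂ := fun h => hzz (by rw [← hunu₁, ← hunu₂, h])
  rw [Finset.one_lt_card]
  exact ⟨u₁, by simp [hu₁], u₂, by simp [hu₂], huu⟩



lemma geom_sum_23 (K : ℕ) : ∑ j ∈ Finset.range K, 2 * 3 ^ j = 3 ^ K - 1 := by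
  induction K with
  | zero => simp
  | succ K ih =>
    rw [Finset.sum_range_succ, ih, pow_succ]
    have h1 : 0 < 3 ^ K := Nat.pow_pos (by norm_num)
    omega

lemma lex_sum_lt {N : ℕ} {d1 d2 : ℕ → ℕ} (hb : ∀ q, d2 q ≤ 2) {q₀ : ℕ} (hq₀ : q₀ < N)
    (hpre : ∀ q < q₀, d1 q = d2 q) (hlt : d2 q₀ < d1 q₀) :
    ∑ q ∈ Finset.range N, d2 q * 3 ^ (N - 1 - q) < ∑ q ∈ Finset.range N, d1 q * 3 ^ (N - 1 - q) := by
  have hsplit : ∀ d : ℕ → ℕ, ∑ q ∈ Finset.range N, d q * 3 ^ (N - 1 - q) =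
      (∑ q ∈ Finset.range q₀, d q * 3 ^ (N - 1 - q)) + (d q₀ * 3 ^ (N - 1 - q₀) +
      ∑ q ∈ Finset.Ico (q₀ + 1) N, d q * 3 ^ (N - 1 - q)) := by
    intro d
    simp only [Finset.range_eq_Ico]
    rw [← Finset.sum_Ico_consecutive _ (Nat.zero_le q₀) (le_of_lt hq₀),
      Finset.sum_eq_sum_Ico_succ_bot (by omega : q₀ < N)]
  rw [hsplit d1, hsplit d2]
  have htail : ∑ q ∈ Finset.Ico (q₀ + 1) N, d2 q * 3 ^ (N - 1 - q) < 3 ^ (N - 1 - q₀) := by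
    have hb2 : ∑ q ∈ Finset.Ico (q₀ + 1) N, d2 q * 3 ^ (N - 1 - q) ≤
        ∑ q ∈ Finset.Ico (q₀ + 1) N, 2 * 3 ^ (N - 1 - q) := by
      apply Finset.sum_le_sum
      intro q _
      exact Nat.mul_le_mul_right _ (hb q)
    have hre : ∑ q ∈ Finset.Ico (q₀ + 1) N, 2 * 3 ^ (N - 1 - q) =
        ∑ j ∈ Finset.range (N - 1 - q₀), 2 * 3 ^ j := by
      apply Finset.sum_nbij' (i := fun q => N - 1 - q) (j := fun j => N - 1 - j)
      · intro q hq; simp only [Finset.mem_Ico] at hq; simp only [Finset.mem_range]; omega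
      · intro j hj; simp only [Finset.mem_range] at hj; simp only [Finset.mem_Ico]; omega
      · intro q hq; simp only [Finset.mem_Ico] at hq; omega
      · intro j hj; simp only [Finset.mem_range] at hj; omega
      · intro q hq; simp only [Finset.mem_Ico] at hq; congr 1
    have hgeo := geom_sum_23 (N - 1 - q₀)
    have hpos : 0 < 3 ^ (N - 1 - q₀) := Nat.pow_pos (by norm_num)
    omega
  have hpre' : ∑ q ∈ Finset.range q₀, d1 q * 3 ^ (N - 1 - q) =
      ∑ q ∈ Finset.range q₀, d2 q * 3 ^ (N - 1 - q) := by
    apply Finset.sum_congr rfl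
    intro q hq
    rw [hpre q (Finset.mem_range.mp hq)]
  rw [hpre']
  have hmul : (d2 q₀ + 1) * 3 ^ (N - 1 - q₀) ≤ d1 q₀ * 3 ^ (N - 1 - q₀) :=
    Nat.mul_le_mul_right _ hlt
  have hdistrib : (d2 q₀ + 1) * 3 ^ (N - 1 - q₀) = d2 q₀ * 3 ^ (N - 1 - q₀) + 3 ^ (N - 1 - q₀) := by
    ring
  omega

/-- the family of "direction" functions -/
def DfunN (i : ℕ) : ℕ → Bool := fun q =>
  if i = 0 then false
  else if i = 1 then true
  else xor (q.testBit ((i - 2) / 2)) (decide (((i - 2) % 2) = 1))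

lemma DfunN_mixed (j : ℕ) (ε : Bool) (q : ℕ) :
    DfunN (2 + 2 * j + (cond ε 1 0)) q = xor (q.testBit j) ε := by
  cases ε
  · show DfunN (2 + 2 * j + 0) q = _
    unfold DfunN
    rw [if_neg (by omega), if_neg (by omega)]
    have h1 : (2 + 2 * j + 0 - 2) / 2 = j := by omega
    have h3 : (2 + 2 * j + 0 - 2) % 2 = 0 := by omega
    rw [h1, h3]
    simp
  · show DfunN (2 + 2 * j + 1) q = _
    unfold DfunN
    rw [if_neg (by omega), if_neg (by omega)]
    have h1 : (2 + 2 * j + 1 - 2) / 2 = j := by omega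
    have h3 : (2 + 2 * j + 1 - 2) % 2 = 1 := by omega
    rw [h1, h3]
    simp

lemma exists_bit_ne {a b : ℕ} (h : a ≠ b) : ∃ j, a.testBit j ≠ b.testBit j := by
  by_contra hcon
  push_neg at hcon
  exact h (Nat.eq_of_testBit_eq hcon)

lemma Dfam {B N : ℕ} (hNB : N ≤ 2 ^ B) (g : ℕ → Bool) (q₁ q₂ : ℕ) (h₁ : q₁ < N) (h₂ : q₂ < N) :
    ∃ i : Fin (2 + 2 * B), DfunN (i : ℕ) q₁ = g q₁ ∧ DfunN (i : ℕ) q₂ = g q₂ := by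
  by_cases hg : g q₁ = g q₂
  · cases hval : g q₁ with
    | false => exact ⟨⟨0, by omega⟩, by simp [DfunN, hval], by simp [DfunN, hval ▸ hg.symm]⟩
    | true => exact ⟨⟨1, by omega⟩, by simp [DfunN, hval], by simp [DfunN, hval ▸ hg.symm]⟩
  · have hq : q₁ ≠ q₂ := fun h => hg (h ▸ rfl)
    obtain ⟨j, hj⟩ := exists_bit_ne hq
    have hjlt : j < B := by
      by_contra hge
      push_neg at hge
      have h2B : (2:ℕ) ^ B ≤ 2 ^ j := Nat.pow_le_pow_right (by norm_num) hge
      rw [Nat.testBit_eq_false_of_lt (by omega), Nat.testBit_eq_false_of_lt (by omega)] at hj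
      exact hj rfl
    set ε : Bool := xor (q₁.testBit j) (g q₁) with hε
    refine ⟨⟨2 + 2 * j + (cond ε 1 0), by cases ε <;> simp <;> omega⟩, ?_, ?_⟩
    · rw [DfunN_mixed j ε q₁, hε]
      cases h1 : q₁.testBit j <;> cases h2 : g q₁ <;> simp
    · rw [DfunN_mixed j ε q₂, hε]
      have hbit : q₂.testBit j = !(q₁.testBit j) := by
        cases h1 : q₁.testBit j <;> cases h2 : q₂.testBit j <;> simp_all
      have hgg : g q₂ = !(g q₁) := by
        cases h1 : g q₁ <;> cases h2 : g q₂ <;> simp_all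
      rw [hbit, hgg]
      cases h1 : q₁.testBit j <;> cases h2 : g q₁ <;> simp

section Rooted

variable (hT : G.IsTree) (c : V)

/-- `w` is an ancestor of `v` in the tree rooted at `c`. -/
def anc (w v : V) : Prop := w ∈ (tp hT c v).support

lemma anc_self (v : V) : anc hT c v v := SimpleGraph.Walk.end_mem_support _
lemma anc_root (v : V) : anc hT c c v := SimpleGraph.Walk.start_mem_support _

lemma anc_dist {w v : V} (h : anc hT c w v) : G.dist c w + G.dist w v = G.dist c v :=
  dist_add_of_mem hT h

lemma anc_depth_le {w v : V} (h : anc hT c w v) : G.dist c w ≤ G.dist c v := by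
  have := anc_dist hT c h; omega

lemma anc_trans {a b v : V} (h1 : anc hT c a b) (h2 : anc hT c b v) : anc hT c a v :=
  tp_support_mono hT (SimpleGraph.Walk.start_mem_support _) h2 a h1

lemma anc_eq_of_depth {w v : V} (h : anc hT c w v) (hd : G.dist c w = G.dist c v) : w = v :=
  eq_of_mem_of_dist_eq hT h (SimpleGraph.Walk.end_mem_support _) hd

/-- the ancestor of `v` at depth `t`. -/
noncomputable def ancAt (t : ℕ) (v : V) : V :=
  if h : ∃ a, a ∈ (tp hT c v).support ∧ G.dist c a = t then h.choose else v

lemma ancAt_exists {t : ℕ} (v : V) (htv : t ≤ G.dist c v) :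
    ∃ a, a ∈ (tp hT c v).support ∧ G.dist c a = t := by
  classical
  set p := tp hT c v with hp
  have hnodup : p.support.Nodup := (tp_isPath hT c v).2
  set s : Finset V := p.support.toFinset with hs
  have hcard : s.card = G.dist c v + 1 := by
    rw [hs, List.toFinset_card_of_nodup hnodup, SimpleGraph.Walk.length_support, hp,
      tp_length]
  have hsub : s.image (G.dist c) ⊆ Finset.range (G.dist c v + 1) := by
    intro x hx
    simp only [Finset.mem_image] at hx
    obtain ⟨a, ha, rfl⟩ := hx
    rw [hs, List.mem_toFinset] at ha
    have := dist_add_of_mem hT (hp ▸ ha)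
    simp only [Finset.mem_range]
    omega
  have hinj : Set.InjOn (G.dist c) s := by
    intro a ha b hb hab
    rw [Finset.mem_coe, List.mem_toFinset] at ha hb
    exact eq_of_mem_of_dist_eq hT (hp ▸ ha) (hp ▸ hb) hab
  have hcard2 : (s.image (G.dist c)).card = s.card := Finset.card_image_of_injOn hinj
  have heq : s.image (G.dist c) = Finset.range (G.dist c v + 1) := by
    apply Finset.eq_of_subset_of_card_le hsub
    rw [hcard2, hcard, Finset.card_range]
  have : t ∈ s.image (G.dist c) := by
    rw [heq, Finset.mem_range]; omega
  simp only [Finset.mem_image] at this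
  obtain ⟨a, ha, hd⟩ := this
  rw [hs, List.mem_toFinset] at ha
  exact ⟨a, ha, hd⟩

lemma ancAt_spec {t : ℕ} {v : V} (htv : t ≤ G.dist c v) :
    ancAt hT c t v ∈ (tp hT c v).support ∧ G.dist c (ancAt hT c t v) = t := by
  rw [ancAt, dif_pos (ancAt_exists hT c v htv)]
  exact (ancAt_exists hT c v htv).choose_spec

lemma ancAt_eq {t : ℕ} {v a : V} (ha : a ∈ (tp hT c v).support) (hd : G.dist c a = t) :
    ancAt hT c t v = a := by
  have hex : ∃ a, a ∈ (tp hT c v).support ∧ G.dist c a = t := ⟨a, ha, hd⟩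
  rw [ancAt, dif_pos hex]
  exact eq_of_mem_of_dist_eq hT hex.choose_spec.1 ha (by rw [hex.choose_spec.2, hd])

lemma ancAt_self (v : V) : ancAt hT c (G.dist c v) v = v :=
  ancAt_eq hT c (SimpleGraph.Walk.end_mem_support _) rfl

lemma ancAt_zero (v : V) : ancAt hT c 0 v = c :=
  ancAt_eq hT c (SimpleGraph.Walk.start_mem_support _) (by simp)

lemma ancAt_anc {t : ℕ} {v : V} (htv : t ≤ G.dist c v) : anc hT c (ancAt hT c t v) v :=
  (ancAt_spec hT c htv).1

lemma ancAt_of_anc {t : ℕ} {w v : V} (hwv : anc hT c w v) (ht : t ≤ G.dist c w) :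
    ancAt hT c t w = ancAt hT c t v := by
  obtain ⟨hmem, hd⟩ := ancAt_spec hT c ht
  have := tp_support_mono hT (SimpleGraph.Walk.start_mem_support _) hwv _ hmem
  exact (ancAt_eq hT c this hd).symm

lemma ancAt_agree_mono {t s : ℕ} {e f : V} (h : ancAt hT c t e = ancAt hT c t f)
    (hte : t ≤ G.dist c e) (htf : t ≤ G.dist c f) (hst : s ≤ t) :
    ancAt hT c s e = ancAt hT c s f := by
  have h1 : ancAt hT c s (ancAt hT c t e) = ancAt hT c s e :=
    ancAt_of_anc hT c (ancAt_anc hT c hte) (by rw [(ancAt_spec hT c hte).2]; exact hst)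
  have h2 : ancAt hT c s (ancAt hT c t f) = ancAt hT c s f :=
    ancAt_of_anc hT c (ancAt_anc hT c htf) (by rw [(ancAt_spec hT c htf).2]; exact hst)
  rw [← h1, ← h2, h]

/-- parent in the rooted tree. -/
noncomputable def parentD (v : V) : V := ancAt hT c (G.dist c v - 1) v

lemma parentD_adj {v : V} (hv : v ≠ c) : G.Adj (parentD hT c v) v := by
  obtain ⟨hadj, hmem, hd1⟩ := nu_spec hT (e := v) (v := c) (Ne.symm hv)
  set n := nu hT v c with hn
  have hmem' : n ∈ (tp hT c v).support := (mem_tp_symm hT).mp hmem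
  have hsum := dist_add_of_mem hT hmem'
  have hnv : G.dist n v = 1 := by rw [SimpleGraph.dist_comm]; exact hd1
  have hdn : G.dist c n = G.dist c v - 1 := by omega
  have := ancAt_eq hT c hmem' hdn
  rw [parentD, this]
  exact hadj.symm

lemma parentD_ancAt {t : ℕ} {v : V} (h : t + 1 ≤ G.dist c v) :
    parentD hT c (ancAt hT c (t + 1) v) = ancAt hT c t v := by
  obtain ⟨hmem, hd⟩ := ancAt_spec hT c h
  rw [parentD, hd]
  simp only [Nat.add_sub_cancel]
  exact ancAt_of_anc hT c hmem (by rw [hd]; omega)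

lemma ancAt_ne_root {t : ℕ} {v : V} (h : t + 1 ≤ G.dist c v) : ancAt hT c (t + 1) v ≠ c := by
  intro heq
  have := (ancAt_spec hT c h).2
  rw [heq, SimpleGraph.dist_self] at this
  omega



/-- index of a vertex among its siblings. -/
noncomputable def sib (v : V) : Finset V :=
  Finset.univ.filter (fun w => w ≠ c ∧ parentD hT c w = parentD hT c v)

noncomputable def sigma (v : V) : ℕ :=
  ((sib hT c v).filter
    (fun w => ((Fintype.equivFin V) w : ℕ) < ((Fintype.equivFin V) v : ℕ))).card

lemma sib_eq {u v : V} (hp : parentD hT c u = parentD hT c v) : sib hT c u = sib hT c v := by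
  unfold sib
  apply Finset.filter_congr
  intro w _
  rw [hp]

lemma mem_sib_self {v : V} (hv : v ≠ c) : v ∈ sib hT c v := by
  simp [sib, hv]

lemma sib_subset_nbr (v : V) : sib hT c v ⊆ G.neighborFinset (parentD hT c v) := by
  intro w hw
  simp only [sib, Finset.mem_filter, Finset.mem_univ, true_and] at hw
  rw [SimpleGraph.mem_neighborFinset, ← hw.2]
  exact parentD_adj hT c hw.1

lemma sigma_lt_deg {v : V} (hv : v ≠ c) : sigma hT c v < G.maxDegree := by
  have h1 : ((sib hT c v).filter
      (fun w => ((Fintype.equivFin V) w : ℕ) < ((Fintype.equivFin V) v : ℕ))) ⊂ sib hT c v := by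
    rw [Finset.ssubset_iff_of_subset (Finset.filter_subset _ _)]
    exact ⟨v, mem_sib_self hT c hv, by simp⟩
  calc sigma hT c v < (sib hT c v).card := Finset.card_lt_card h1
    _ ≤ (G.neighborFinset (parentD hT c v)).card := Finset.card_le_card (sib_subset_nbr hT c v)
    _ = G.degree (parentD hT c v) := SimpleGraph.card_neighborFinset_eq_degree _ _
    _ ≤ G.maxDegree := SimpleGraph.degree_le_maxDegree _ _

lemma sigma_ne {u v : V} (hu : u ≠ c) (hv : v ≠ c) (hp : parentD hT c u = parentD hT c v)
    (huv : u ≠ v) : sigma hT c u ≠ sigma hT c v := by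
  have hsib := sib_eq hT c hp
  have key : ∀ a b : V, a ≠ c → b ≠ c → parentD hT c a = parentD hT c b →
      ((Fintype.equivFin V) a : ℕ) < ((Fintype.equivFin V) b : ℕ) →
      sigma hT c a < sigma hT c b := by
    intro a b ha hb hab hlt
    have hsib' := sib_eq hT c hab
    apply Finset.card_lt_card
    rw [hsib']
    rw [Finset.ssubset_iff_of_subset]
    · exact ⟨a, Finset.mem_filter.mpr ⟨hsib' ▸ mem_sib_self hT c ha, hlt⟩,
        fun hcon => absurd (Finset.mem_filter.mp hcon).2 (lt_irrefl _)⟩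
    · intro w hw
      simp only [Finset.mem_filter] at hw ⊢
      exact ⟨hw.1, lt_trans hw.2 hlt⟩
  rcases lt_trichotomy ((Fintype.equivFin V) u : ℕ) ((Fintype.equivFin V) v : ℕ) with h | h | h
  · exact ne_of_lt (key u v hu hv hp h)
  · exfalso
    exact huv ((Fintype.equivFin V).injective (Fin.ext h))
  · exact (ne_of_lt (key v u hv hu hp.symm h)).symm

section Digits

variable (m : ℕ)

/-- the bit of the code of `v` at position `q`. -/
noncomputable def bitOf (v : V) (q : ℕ) : Bool :=
  (sigma hT c (ancAt hT c (q / m + 1) v)).testBit (q % m)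

noncomputable def digitB (D : ℕ → Bool) (v : V) (q : ℕ) : ℕ :=
  if q / m < G.dist c v then (if bitOf hT c m v q = D q then 2 else 1) else 0

lemma digitB_le_two (D : ℕ → Bool) (v : V) (q : ℕ) : digitB hT c m D v q ≤ 2 := by
  unfold digitB
  split
  · split <;> omega
  · omega

lemma digitB_agree {w v : V} (hwv : anc hT c w v) {q : ℕ} (hq : q / m < G.dist c w)
    (D : ℕ → Bool) : digitB hT c m D w q = digitB hT c m D v q := by
  have hle := anc_depth_le hT c hwv
  have hanc : ancAt hT c (q / m + 1) w = ancAt hT c (q / m + 1) v :=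
    ancAt_of_anc hT c hwv (by omega)
  unfold digitB bitOf
  rw [if_pos hq, if_pos (lt_of_lt_of_le hq hle), hanc]

noncomputable def KD (N : ℕ) (D : ℕ → Bool) (v : V) : ℕ :=
  ∑ q ∈ Finset.range N, digitB hT c m D v q * 3 ^ (N - 1 - q)

lemma KD_mono {w v : V} (hwv : anc hT c w v) (N : ℕ) (D : ℕ → Bool) :
    KD hT c m N D w ≤ KD hT c m N D v := by
  apply Finset.sum_le_sum
  intro q _
  apply Nat.mul_le_mul_right
  by_cases hq : q / m < G.dist c w
  · rw [digitB_agree hT c m hwv hq]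
  · unfold digitB

    rw [if_neg hq]
    omega



lemma digitB_eq_of_ancAt_eq {e f : V} {q : ℕ} (he' : q / m < G.dist c e)
    (hf' : q / m < G.dist c f)
    (hanc : ancAt hT c (q / m + 1) e = ancAt hT c (q / m + 1) f) (D : ℕ → Bool) :
    digitB hT c m D e q = digitB hT c m D f q := by
  unfold digitB bitOf
  rw [if_pos he', if_pos hf', hanc]

/-- Main per-pair comparison: if `e` is not an ancestor of `f` then `e` beats `f`,
either unconditionally or provided the direction at one position matches `e`'s bit. -/
lemma key_beats {r : ℕ} (hΔm : ∀ v : V, v ≠ c → sigma hT c v < 2 ^ m) (hm : 0 < m)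
    {e f : V} (hre : G.dist c e ≤ r) (hrf : G.dist c f ≤ r)
    (he : ¬ anc hT c e f) :
    (∀ D : ℕ → Bool, KD hT c m (r * m) D f < KD hT c m (r * m) D e) ∨
    (∃ q < r * m, ∀ D : ℕ → Bool, D q = bitOf hT c m e q →
      KD hT c m (r * m) D f < KD hT c m (r * m) D e) := by
  have hfe_ne : f ≠ e := by
    intro h; exact he (h ▸ anc_self hT c e)
  by_cases hfe : anc hT c f e
  · -- `f` is a strict ancestor of `e`; `e` wins in every lexicographic order
    left
    intro D
    have hdf : G.dist c f < G.dist c e := by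
      have h1 := anc_dist hT c hfe
      have h2 := dist_pos_of_ne hT hfe_ne
      omega
    have hq₀N : m * G.dist c f < r * m := by
      have h1 : m * (G.dist c f + 1) ≤ m * r := Nat.mul_le_mul_left m (by omega)
      have h2 : m * (G.dist c f + 1) = m * G.dist c f + m := by ring
      have h3 : r * m = m * r := mul_comm r m
      omega
    apply lex_sum_lt (fun q => digitB_le_two hT c m D f q) hq₀N
    · intro q hq
      have hqm : q / m < G.dist c f := by
        rw [Nat.div_lt_iff_lt_mul hm, mul_comm]
        exact hq
      exact (digitB_agree hT c m hfe hqm D).symm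
    · have hq₀m : (m * G.dist c f) / m = G.dist c f := Nat.mul_div_cancel_left _ hm
      unfold digitB
      rw [if_neg (by rw [hq₀m]; omega), if_pos (by rw [hq₀m]; omega)]
      split <;> omega
  · -- divergence
    right
    have hef_ne : e ≠ f := fun h => he (h ▸ anc_self hT c f)
    have hA0mem : 0 ∈ (Finset.range (min (G.dist c e) (G.dist c f) + 1)).filter
        (fun t => ancAt hT c t e = ancAt hT c t f) := by
      rw [Finset.mem_filter, Finset.mem_range]
      exact ⟨by omega, by rw [ancAt_zero, ancAt_zero]⟩
    have hAne : ((Finset.range (min (G.dist c e) (G.dist c f) + 1)).filter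
        (fun t => ancAt hT c t e = ancAt hT c t f)).Nonempty := ⟨0, hA0mem⟩
    obtain ⟨t₀, ht₀mem, ht₀max⟩ := Finset.exists_max_image _ id hAne
    rw [Finset.mem_filter, Finset.mem_range] at ht₀mem
    obtain ⟨ht₀lt, ht₀eq⟩ := ht₀mem
    have ht₀e : t₀ < G.dist c e := by
      rcases Nat.lt_or_ge t₀ (G.dist c e) with h | h
      · exact h
      · exfalso
        have h1 : t₀ = G.dist c e := by omega
        have h2 : ancAt hT c t₀ e = e := by rw [h1]; exact ancAt_self hT c e
        rw [h2] at ht₀eq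
        exact he (ht₀eq ▸ ancAt_anc hT c (by omega : t₀ ≤ G.dist c f))
    have ht₀f : t₀ < G.dist c f := by
      rcases Nat.lt_or_ge t₀ (G.dist c f) with h | h
      · exact h
      · exfalso
        have h1 : t₀ = G.dist c f := by omega
        have h2 : ancAt hT c t₀ f = f := by rw [h1]; exact ancAt_self hT c f
        rw [h2] at ht₀eq
        exact hfe (ht₀eq ▸ ancAt_anc hT c (by omega : t₀ ≤ G.dist c e))
    have hEF : ancAt hT c (t₀ + 1) e ≠ ancAt hT c (t₀ + 1) f := by
      intro hcon
      have hmem2 : t₀ + 1 ∈ (Finset.range (min (G.dist c e) (G.dist c f) + 1)).filter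
          (fun t => ancAt hT c t e = ancAt hT c t f) := by
        rw [Finset.mem_filter, Finset.mem_range]
        exact ⟨by omega, hcon⟩
      have := ht₀max _ hmem2
      simp only [id] at this
      omega
    have hEc : ancAt hT c (t₀ + 1) e ≠ c := ancAt_ne_root hT c (by omega)
    have hFc : ancAt hT c (t₀ + 1) f ≠ c := ancAt_ne_root hT c (by omega)
    have hpar : parentD hT c (ancAt hT c (t₀ + 1) e) = parentD hT c (ancAt hT c (t₀ + 1) f) := by
      rw [parentD_ancAt hT c (by omega), parentD_ancAt hT c (by omega), ht₀eq]
    have hsig : sigma hT c (ancAt hT c (t₀ + 1) e) ≠ sigma hT c (ancAt hT c (t₀ + 1) f) :=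
      sigma_ne hT c hEc hFc hpar hEF
    have hjex : ∃ j, (sigma hT c (ancAt hT c (t₀ + 1) e)).testBit j ≠
        (sigma hT c (ancAt hT c (t₀ + 1) f)).testBit j := exists_bit_ne hsig
    have hj₀spec := Nat.find_spec hjex
    have hj₀m : Nat.find hjex < m := by
      by_contra hge
      push_neg at hge
      have h2 : (2:ℕ) ^ m ≤ 2 ^ (Nat.find hjex) := Nat.pow_le_pow_right (by norm_num) hge
      have hE2 := hΔm _ hEc
      have hF2 := hΔm _ hFc
      rw [Nat.testBit_eq_false_of_lt (by omega), Nat.testBit_eq_false_of_lt (by omega)] at hj₀spec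
      exact hj₀spec rfl
    have hq₀N : m * t₀ + Nat.find hjex < r * m := by
      have h1 : m * (t₀ + 1) ≤ m * r := Nat.mul_le_mul_left m (by omega)
      have h2 : m * (t₀ + 1) = m * t₀ + m := by ring
      have h3 : r * m = m * r := mul_comm r m
      omega
    have hq₀div : (m * t₀ + Nat.find hjex) / m = t₀ := by
      rw [Nat.mul_add_div hm, Nat.div_eq_of_lt hj₀m]
      omega
    have hq₀mod : (m * t₀ + Nat.find hjex) % m = Nat.find hjex := by
      rw [Nat.mul_add_mod, Nat.mod_eq_of_lt hj₀m]
    refine ⟨m * t₀ + Nat.find hjex, hq₀N, ?_⟩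
    intro D hD
    apply lex_sum_lt (fun q => digitB_le_two hT c m D f q) hq₀N
    · -- agreement below q₀
      intro q hq
      have hqsum : m * (q / m) + q % m = q := Nat.div_add_mod q m
      have hjjm : q % m < m := Nat.mod_lt _ hm
      have hcases : q / m < t₀ ∨ (q / m = t₀ ∧ q % m < Nat.find hjex) := by
        rcases Nat.lt_or_ge (q / m) t₀ with h | h
        · exact Or.inl h
        · rcases Nat.eq_or_lt_of_le h with h' | h'
          · refine Or.inr ⟨h'.symm, ?_⟩
            have hq' : m * t₀ + q % m = q := by rw [h']; exact hqsum
            omega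
          · exfalso
            have hmt : m * (t₀ + 1) ≤ m * (q / m) := Nat.mul_le_mul_left m h'
            have hmm : m * (t₀ + 1) = m * t₀ + m := by ring
            omega
      rcases hcases with hlt' | ⟨heqt, hjlt⟩
      · exact digitB_eq_of_ancAt_eq hT c m (lt_trans hlt' ht₀e) (lt_trans hlt' ht₀f)
          (ancAt_agree_mono hT c ht₀eq (le_of_lt ht₀e) (le_of_lt ht₀f)
            (Nat.succ_le_of_lt hlt')) D
      · have hbit : (sigma hT c (ancAt hT c (t₀ + 1) e)).testBit (q % m) =
            (sigma hT c (ancAt hT c (t₀ + 1) f)).testBit (q % m) :=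
          not_ne_iff.mp (Nat.find_min hjex hjlt)
        unfold digitB bitOf
        rw [heqt, if_pos ht₀e, if_pos ht₀f, hbit]
    · -- strict at q₀
      have hDbit : D (m * t₀ + Nat.find hjex) =
          (sigma hT c (ancAt hT c (t₀ + 1) e)).testBit (Nat.find hjex) := by
        rw [hD]
        unfold bitOf
        rw [hq₀div, hq₀mod]
      unfold digitB bitOf
      rw [hq₀div, hq₀mod]
      rw [if_pos ht₀f]
      rw [if_neg (show ¬ ((sigma hT c (ancAt hT c (t₀ + 1) f)).testBit (Nat.find hjex) =
        D (m * t₀ + Nat.find hjex)) from fun hcon => hj₀spec (hcon.trans hDbit).symm)]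
      rw [if_pos ht₀e]
      rw [if_pos (show (sigma hT c (ancAt hT c (t₀ + 1) e)).testBit (Nat.find hjex) =
        D (m * t₀ + Nat.find hjex) from hDbit.symm)]
      omega

end Digits
end Rooted

end CPTaux


section Realizer

/-- The generic realizer construction from a monotone separating family. -/
lemma dimLE_of_family {X V : Type} [PartialOrder X] (M : X → Set V)
    (hM2 : ∀ x y : X, x ≠ y → (x ≤ y ↔ M x ⊂ M y)) {t : ℕ} (ht : 2 ≤ t)
    (f : Fin t → X → ℕ)
    (hmono : ∀ (j : Fin t) (x y : X), M x ⊆ M y → f j x ≤ f j y)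
    (hsep : ∀ x y : X, ¬ M x ⊆ M y → ∃ j, f j y < f j x) : DimLE X t := by
  classical
  obtain ⟨s, hs, hext⟩ := extend_partialOrder ((· ≤ ·) : Set V → Set V → Prop)
  letI lo : LinearOrder X := @IsWellOrder.linearOrder X WellOrderingRel inferInstance
  have s_total := hs.toTotal.total
  have s_antisymm := hs.toIsPartialOrder.toAntisymm.antisymm
  have s_trans := hs.toIsPartialOrder.toIsPreorder.toIsTrans.trans
  set tie : Bool → X → X → Prop := fun ε x y =>
    (M x ≠ M y ∧ s (M x) (M y)) ∨ (M x = M y ∧ (cond ε (lo.le x y) (lo.le y x))) with htie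
  have tie_refl : ∀ ε x, tie ε x x := by
    intro ε x
    cases ε
    · exact Or.inr ⟨rfl, lo.le_refl x⟩
    · exact Or.inr ⟨rfl, lo.le_refl x⟩
  have tie_total : ∀ ε x y, tie ε x y ∨ tie ε y x := by
    intro ε x y
    by_cases hxy : M x = M y
    · rcases (lo.le_total x y) with h | h
      · cases ε
        · exact Or.inr (Or.inr ⟨hxy.symm, h⟩)
        · exact Or.inl (Or.inr ⟨hxy, h⟩)
      · cases ε
        · exact Or.inl (Or.inr ⟨hxy, h⟩)
        · exact Or.inr (Or.inr ⟨hxy.symm, h⟩)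
    · rcases s_total (M x) (M y) with h | h
      · exact Or.inl (Or.inl ⟨hxy, h⟩)
      · exact Or.inr (Or.inl ⟨Ne.symm hxy, h⟩)
  have tie_antisymm : ∀ ε x y, tie ε x y → tie ε y x → x = y := by
    intro ε x y h1 h2
    rcases h1 with ⟨hne, hs1⟩ | ⟨heq, hle1⟩
    · rcases h2 with ⟨-, hs2⟩ | ⟨heq, -⟩
      · exact absurd (s_antisymm _ _ hs1 hs2) hne
      · exact absurd heq.symm hne
    · rcases h2 with ⟨hne, -⟩ | ⟨-, hle2⟩
      · exact absurd heq.symm hne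
      · cases ε
        · exact lo.le_antisymm _ _ hle2 hle1
        · exact lo.le_antisymm _ _ hle1 hle2
  have tie_trans : ∀ ε x y z, tie ε x y → tie ε y z → tie ε x z := by
    intro ε x y z h1 h2
    rcases h1 with ⟨hne1, hs1⟩ | ⟨heq1, hle1⟩
    · rcases h2 with ⟨hne2, hs2⟩ | ⟨heq2, hle2⟩
      · left
        refine ⟨fun h => ?_, s_trans _ _ _ hs1 hs2⟩
        rw [← h] at hs2
        exact hne1 (s_antisymm _ _ hs1 hs2)
      · left; exact ⟨heq2 ▸ hne1, heq2 ▸ hs1⟩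
    · rcases h2 with ⟨hne2, hs2⟩ | ⟨heq2, hle2⟩
      · left; exact ⟨heq1 ▸ hne2, heq1 ▸ hs2⟩
      · right
        refine ⟨heq1.trans heq2, ?_⟩
        cases ε
        · exact lo.le_trans _ _ _ hle2 hle1
        · exact lo.le_trans _ _ _ hle1 hle2
  have tie_ext : ∀ ε x y, x ≤ y → x ≠ y → tie ε x y := by
    intro ε x y hxy hne
    have hss : M x ⊂ M y := (hM2 x y hne).mp hxy
    exact Or.inl ⟨hss.ne, hext _ _ hss.le⟩
  -- the linear orders
  set L : Fin t → X → X → Prop := fun j x y =>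
    f j x < f j y ∨ (f j x = f j y ∧ tie (decide ((j : ℕ) = 0)) x y) with hL
  refine ⟨L, fun j => ⟨?_, ?_, ?_, ?_⟩, ?_⟩
  · intro a
    exact Or.inr ⟨rfl, tie_refl _ a⟩
  · rintro a b (h1 | ⟨he1, ht1⟩) (h2 | ⟨he2, ht2⟩)
    · omega
    · omega
    · omega
    · exact tie_antisymm _ a b ht1 ht2
  · rintro a b c (h1 | ⟨he1, ht1⟩) (h2 | ⟨he2, ht2⟩)
    · exact Or.inl (lt_trans h1 h2)
    · exact Or.inl (he2 ▸ h1)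
    · exact Or.inl (he1 ▸ h2)
    · exact Or.inr ⟨he1.trans he2, tie_trans _ a b c ht1 ht2⟩
  · intro a b
    rcases lt_trichotomy (f j a) (f j b) with h | h | h
    · exact Or.inl (Or.inl h)
    · rcases tie_total (decide ((j : ℕ) = 0)) a b with ht' | ht'
      · exact Or.inl (Or.inr ⟨h, ht'⟩)
      · exact Or.inr (Or.inr ⟨h.symm, ht'⟩)
    · exact Or.inr (Or.inl h)
  · intro a b
    constructor
    · intro hab j
      by_cases hne : a = b
      · subst hne; exact Or.inr ⟨rfl, tie_refl _ a⟩
      · have hss : M a ⊂ M b := (hM2 a b hne).mp hab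
        have hle := hmono j a b hss.le
        rcases lt_or_eq_of_le hle with h | h
        · exact Or.inl h
        · exact Or.inr ⟨h, tie_ext _ a b hab hne⟩
    · intro hall
      by_cases hne : a = b
      · subst hne; exact le_refl a
      · have hfle : ∀ j, f j a ≤ f j b := by
          intro j
          rcases hall j with h | ⟨h, -⟩
          · exact le_of_lt h
          · exact le_of_eq h
        have hMab : M a ⊆ M b := by
          by_contra hcon
          obtain ⟨j, hj⟩ := hsep a b hcon
          exact absurd (hfle j) (by omega)
        by_cases hMeq : M a = M b
        · -- all ties : contradiction using the two opposite tie-breaks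
          exfalso
          have hfeq : ∀ j, f j a = f j b := fun j =>
            le_antisymm (hfle j) (hmono j b a hMeq.symm.le)
          have h0 : tie true a b := by
            rcases hall ⟨0, by omega⟩ with h | ⟨-, h⟩
            · have := hfeq ⟨0, by omega⟩; omega
            · simpa using h
          have h1 : tie false a b := by
            rcases hall ⟨1, by omega⟩ with h | ⟨-, h⟩
            · have := hfeq ⟨1, by omega⟩; omega
            · simpa using h
          -- extract the well-order inequalities
          rcases h0 with ⟨hne', -⟩ | ⟨-, hle0⟩
          · exact hne' hMeq
          rcases h1 with ⟨hne', -⟩ | ⟨-, hle1⟩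
          · exact hne' hMeq
          exact hne (lo.le_antisymm _ _ hle0 hle1)
        · exact (hM2 a b hne).mpr ⟨hMab, fun h => hMeq (le_antisymm hMab h)⟩

/-- padding a realizer -/
lemma DimLE.of_le {X : Type} [PartialOrder X] {t t' : ℕ} (h : DimLE X t) (ht : 0 < t)
    (htt : t ≤ t') : DimLE X t' := by
  obtain ⟨L, hL, hiff⟩ := h
  refine ⟨fun i => L (if h2 : (i : ℕ) < t then ⟨i, h2⟩ else ⟨0, ht⟩), fun i => hL _, fun a b => ?_⟩
  rw [hiff]
  constructor
  · intro hall i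
    exact hall _
  · intro hall j
    have := hall ⟨(j : ℕ), lt_of_lt_of_le j.2 htt⟩
    simpa [j.2] using this

end Realizer

-- new helper lemmas for the assembly
variable {V : Type} [Fintype V] [DecidableEq V] {G : SimpleGraph V} [DecidableRel G.Adj]

namespace CPTaux

lemma depth_sep (hT : G.IsTree) (c : V) {e a b : V} {p : G.Walk a b} (hp : p.IsPath)
    (he : e ∉ p.support) (hanc : anc hT c e a) :
    ∀ w ∈ p.support, G.dist c e < G.dist c w := by
  intro w hw
  have hpe : p = tp hT a b := tp_eq hT p hp
  have hwe : w ≠ e := fun h' => he (h' ▸ hw)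
  rcases tp_support_union hT c w a hanc with hcw | hwa
  · have h1 := dist_add_of_mem hT hcw
    have h2 : 0 < G.dist e w := dist_pos_of_ne hT (fun h => hwe h.symm)
    omega
  · exfalso
    apply he
    rw [hpe]
    exact tp_support_mono hT (hpe ▸ hw) (hpe ▸ p.start_mem_support) e hwa

lemma endpoint_dom (hT : G.IsTree) (c : V) {a b : V} {p : G.Walk a b} (hp : p.IsPath)
    {w : V} (hw : w ∈ p.support) : anc hT c w a ∨ anc hT c w b := by
  have hpe : p = tp hT a b := tp_eq hT p hp
  rcases tp_support_union hT a c b (hpe ▸ hw) with h | h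
  · left; exact (mem_tp_symm hT).mp h
  · right; exact h

lemma dist_lt_card (hT : G.IsTree) (u v : V) : G.dist u v < Fintype.card V := by
  have h1 : (tp hT u v).support.length = (tp hT u v).length + 1 :=
    SimpleGraph.Walk.length_support _
  have h2 : (tp hT u v).support.length ≤ Fintype.card V :=
    (tp_isPath hT u v).2.length_le_card
  rw [tp_length] at h1
  omega

/-- The leaf bound: DimLE X (number of leaves). -/
lemma dimle_leaf {X : Type} [PartialOrder X] (hT : G.IsTree) (h2 : 2 ≤ G.maxDegree)
    (M : X → Set V) (hM : GraphCPTModel G M) :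
    DimLE X ((Finset.univ.filter fun v => G.degree v = 1).card) := by
  classical
  set lv := (Finset.univ.filter fun v => G.degree v = 1).card with hlv
  have hlv2 : 2 ≤ lv := two_leaves hT h2
  set enum := (Finset.univ.filter fun v => G.degree v = 1).equivFin with henum
  set lf : Fin lv → V := fun i => (enum.symm i : V) with hlf
  apply dimLE_of_family M hM.2 hlv2 (fun i x => Fintype.card V - sInf (G.dist (lf i) '' M x))
  · -- monotone
    intro j x y hxy
    obtain ⟨ux, vx, px, hpx, hMx⟩ := hM.1 x
    have hxne : (M x).Nonempty := ⟨ux, by rw [hMx]; exact px.start_mem_support⟩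
    obtain ⟨dw, hdw⟩ := Nat.sInf_mem (hxne.image (G.dist (lf j)))
    apply Nat.sub_le_sub_left
    rw [← hdw.2]
    apply Nat.sInf_le
    exact Set.mem_image_of_mem _ (hxy hdw.1)
  · -- separating
    intro x y hxy
    rw [Set.not_subset] at hxy
    obtain ⟨e, hex, hey⟩ := hxy
    obtain ⟨uy, vy, py, hpy, hMy⟩ := hM.1 y
    have heyp : e ∉ py.support := by
      intro h; exact hey (by rw [hMy]; exact h)
    obtain ⟨u, hu1, husep⟩ := leaf_separation hT py hpy heyp
    have humem : u ∈ Finset.univ.filter fun v => G.degree v = 1 := by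
      simp [hu1]
    refine ⟨enum ⟨u, humem⟩, ?_⟩
    have hlfu : lf (enum ⟨u, humem⟩) = u := by
      rw [hlf]
      simp
    rw [hlfu]
    -- inf over M y is > dist u e ≥ inf over M x
    have hyne : (M y).Nonempty := ⟨uy, by rw [hMy]; exact py.start_mem_support⟩
    obtain ⟨dwy, hdwy⟩ := Nat.sInf_mem (hyne.image (G.dist u))
    have hgt : G.dist u e < sInf (G.dist u '' M y) := by
      rw [← hdwy.2]
      exact husep dwy (by rw [hMy] at hdwy; exact hdwy.1)
    have hle : sInf (G.dist u '' M x) ≤ G.dist u e :=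
      Nat.sInf_le (Set.mem_image_of_mem _ hex)
    have hcard : G.dist u e < Fintype.card V := dist_lt_card hT u e
    omega

/-- The logarithmic bound. -/
lemma dimle_log {X : Type} [PartialOrder X] (hT : G.IsTree) (c : V) {r m : ℕ}
    (hr : 1 ≤ r) (hm : 0 < m)
    (hc : ∀ v, G.dist c v ≤ r)
    (hΔm : ∀ v : V, v ≠ c → sigma hT c v < 2 ^ m)
    (M : X → Set V) (hM : GraphCPTModel G M) :
    DimLE X (3 + 2 * Nat.clog 2 (r * m)) := by
  classical
  set B := Nat.clog 2 (r * m) with hB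
  have hNB : r * m ≤ 2 ^ B := Nat.le_pow_clog (by norm_num) _
  have hN0 : 0 < r * m := Nat.mul_pos (by omega) hm
  set F : Fin (3 + 2 * B) → X → ℕ := fun i x =>
    if (i : ℕ) = 0 then (r + 1) - sInf (G.dist c '' M x)
    else sSup (KD hT c m (r * m) (DfunN ((i : ℕ) - 1)) '' M x) with hF
  have hbddKD : ∀ (D : ℕ → Bool) (x : X), BddAbove (KD hT c m (r * m) D '' M x) :=
    fun D x => ((Set.toFinite (M x)).image _).bddAbove
  have hMne : ∀ x : X, (M x).Nonempty := by
    intro x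
    obtain ⟨ux, vx, px, hpx, hMx⟩ := hM.1 x
    exact ⟨ux, by rw [hMx]; exact px.start_mem_support⟩
  apply dimLE_of_family M hM.2 (by omega) F
  · -- monotone
    intro j x y hxy
    by_cases hj : (j : ℕ) = 0
    · simp only [hF, hj, if_pos]
      obtain ⟨dw, hdw⟩ := Nat.sInf_mem ((hMne x).image (G.dist c))
      apply Nat.sub_le_sub_left
      rw [← hdw.2]
      exact Nat.sInf_le (Set.mem_image_of_mem _ (hxy hdw.1))
    · simp only [hF, hj, if_neg, if_false]
      obtain ⟨kw, hkw⟩ := Nat.sSup_mem ((hMne x).image _) (hbddKD _ x)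
      rw [← hkw.2]
      exact le_csSup (hbddKD _ y) (Set.mem_image_of_mem _ (hxy hkw.1))
  · -- separating
    intro x y hxy
    rw [Set.not_subset] at hxy
    obtain ⟨e, hex, hey⟩ := hxy
    obtain ⟨uy, vy, py, hpy, hMy⟩ := hM.1 y
    have hmemy : ∀ w : V, w ∈ M y ↔ w ∈ py.support := by
      intro w; rw [hMy]; rfl
    have heyp : e ∉ py.support := fun h => hey ((hmemy e).mpr h)
    by_cases hanc : anc hT c e uy ∨ anc hT c e vy
    · -- depth separation
      have hsep : ∀ w ∈ py.support, G.dist c e < G.dist c w := by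
        rcases hanc with h | h
        · exact depth_sep hT c hpy heyp h
        · intro w hw
          have hrev : e ∉ py.reverse.support := by
            rwa [SimpleGraph.Walk.support_reverse, List.mem_reverse]
          exact depth_sep hT c hpy.reverse hrev h w
            (by rwa [SimpleGraph.Walk.support_reverse, List.mem_reverse])
      refine ⟨⟨0, by omega⟩, ?_⟩
      simp only [hF, if_true]
      obtain ⟨dwy, hdwy⟩ := Nat.sInf_mem ((hMne y).image (G.dist c))
      have hgt : G.dist c e < sInf (G.dist c '' M y) := by
        rw [← hdwy.2]
        exact hsep dwy ((hmemy dwy).mp hdwy.1)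
      have hle : sInf (G.dist c '' M x) ≤ G.dist c e :=
        Nat.sInf_le (Set.mem_image_of_mem _ hex)
      have hre : G.dist c e ≤ r := hc e
      omega
    · -- lexicographic separation
      push_neg at hanc
      obtain ⟨hancu, hancv⟩ := hanc
      have hku := key_beats hT c m hΔm hm (hc e) (hc uy) hancu
      have hkv := key_beats hT c m hΔm hm (hc e) (hc vy) hancv
      have hgetD : ∃ D : ℕ → Bool, (∃ i : Fin (2 + 2 * B), D = DfunN (i : ℕ)) ∧
          KD hT c m (r * m) D uy < KD hT c m (r * m) D e ∧
          KD hT c m (r * m) D vy < KD hT c m (r * m) D e := by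
        rcases hku with hku | ⟨q₁, hq₁, hku⟩
        · rcases hkv with hkv | ⟨q₂, hq₂, hkv⟩
          · obtain ⟨i, hi1, hi2⟩ := Dfam hNB (bitOf hT c m e) 0 0 hN0 hN0
            exact ⟨DfunN (i : ℕ), ⟨i, rfl⟩, hku _, hkv _⟩
          · obtain ⟨i, hi1, hi2⟩ := Dfam hNB (bitOf hT c m e) q₂ q₂ hq₂ hq₂
            exact ⟨DfunN (i : ℕ), ⟨i, rfl⟩, hku _, hkv _ hi1⟩
        · rcases hkv with hkv | ⟨q₂, hq₂, hkv⟩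
          · obtain ⟨i, hi1, hi2⟩ := Dfam hNB (bitOf hT c m e) q₁ q₁ hq₁ hq₁
            exact ⟨DfunN (i : ℕ), ⟨i, rfl⟩, hku _ hi1, hkv _⟩
          · obtain ⟨i, hi1, hi2⟩ := Dfam hNB (bitOf hT c m e) q₁ q₂ hq₁ hq₂
            exact ⟨DfunN (i : ℕ), ⟨i, rfl⟩, hku _ hi1, hkv _ hi2⟩
      obtain ⟨D, ⟨i, hDi⟩, hDu, hDv⟩ := hgetD
      refine ⟨⟨1 + (i : ℕ), by omega⟩, ?_⟩
      simp only [hF]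
      rw [if_neg (by omega), if_neg (by omega)]
      have hidx : 1 + (i : ℕ) - 1 = (i : ℕ) := by omega
      rw [hidx, ← hDi]
      -- sSup over M y < KD e ≤ sSup over M x
      obtain ⟨w₀, hw₀, hkweq⟩ := Nat.sSup_mem ((hMne y).image _) (hbddKD D y)
      have h1 : sSup (KD hT c m (r * m) D '' M y) < KD hT c m (r * m) D e := by
        rw [← hkweq]
        rcases endpoint_dom hT c hpy ((hmemy w₀).mp hw₀) with hdom | hdom
        · exact lt_of_le_of_lt (KD_mono hT c m hdom (r * m) D) hDu
        · exact lt_of_le_of_lt (KD_mono hT c m hdom (r * m) D) hDv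
      have h2 : KD hT c m (r * m) D e ≤ sSup (KD hT c m (r * m) D '' M x) :=
        le_csSup (hbddKD D x) (Set.mem_image_of_mem _ hex)
      exact lt_of_lt_of_le h1 h2

end CPTaux

/-- If a poset admits a containment model by paths in a host tree of
maximum degree `Δ ≥ 2`, radius `r ≥ 1` and at most `l` leaves, then its dimension is at
most `min(l, 2⌈log₂ log₂ Δ⌉ + 2⌈log₂ r⌉ + 3)`. -/
theorem dim_CPT_poset_min {V : Type} [Fintype V] [DecidableEq V]
    (G : SimpleGraph V) [DecidableRel G.Adj] (hT : G.IsTree)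
    (Δ r l : ℕ) (hΔ : 2 ≤ Δ) (hr : 1 ≤ r)
    (hdeg : G.maxDegree = Δ) (hrad : graphRadius G = r)
    (hl : (Finset.univ.filter fun v => G.degree v = 1).card ≤ l)
    {X : Type} [PartialOrder X] (M : X → Set V) (hM : GraphCPTModel G M) :
    DimLE X (min l (2 * Nat.clog 2 (Nat.clog 2 Δ) + 2 * Nat.clog 2 r + 3)) := by
  classical
  have hne : Nonempty V := hT.isConnected.nonempty
  have hradset : {e | ∃ c : V, ∀ v, G.dist c v ≤ e}.Nonempty := by
    obtain ⟨c₀⟩ := hne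
    exact ⟨Finset.univ.sup (G.dist c₀), c₀, fun v => Finset.le_sup (Finset.mem_univ v)⟩
  have hrmem : r ∈ {e | ∃ c : V, ∀ v, G.dist c v ≤ e} := by
    rw [← hrad]
    exact Nat.sInf_mem hradset
  obtain ⟨c, hc⟩ := hrmem
  set m := Nat.clog 2 Δ with hm
  have hm0 : 0 < m := Nat.clog_pos (by norm_num) hΔ
  have hΔ2m : Δ ≤ 2 ^ m := Nat.le_pow_clog (by norm_num) Δ
  have hΔm : ∀ v : V, v ≠ c → CPTaux.sigma hT c v < 2 ^ m := by
    intro v hv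
    have h1 := CPTaux.sigma_lt_deg hT c hv
    rw [hdeg] at h1
    omega
  have hmax2 : 2 ≤ G.maxDegree := hdeg ▸ hΔ
  set k := 2 * Nat.clog 2 m + 2 * Nat.clog 2 r + 3 with hk
  have hBle : Nat.clog 2 (r * m) ≤ Nat.clog 2 r + Nat.clog 2 m := by
    rw [Nat.clog_le_iff_le_pow (by norm_num)]
    calc r * m ≤ 2 ^ Nat.clog 2 r * 2 ^ Nat.clog 2 m :=
        Nat.mul_le_mul (Nat.le_pow_clog (by norm_num) r) (Nat.le_pow_clog (by norm_num) m)
      _ = 2 ^ (Nat.clog 2 r + Nat.clog 2 m) := (pow_add 2 _ _).symm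
  have hlogk : 3 + 2 * Nat.clog 2 (r * m) ≤ k := by omega
  rcases le_total l k with hcase | hcase
  · rw [min_eq_left hcase]
    have hlv2 := CPTaux.two_leaves hT hmax2
    exact (CPTaux.dimle_leaf hT hmax2 M hM).of_le (by omega) hl
  · rw [min_eq_right hcase]
    exact (CPTaux.dimle_log hT c hr hm0 hc hΔm M hM).of_le (by omega) hlogk
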